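/- Under Assumption A with k > 0, fix ε > 0 and define, for Borel rectangles B = B₁ × B₂ ⊆ [0,∞)², μ(B) = P[ω·η₃² ∈ B₁, ω·η₁² ≤ k·ε, ω·η₂² ≤ k·ε, ω·η₂² ∈ B₂, and η₂² ≤ k·η₁²], where η₁, η₂, η₃ are i.i.d. copies of η. Then μ([0,∞)×[0,∞)) > 0, and for every x = (x₁,x₂) with x₁ ≤ k·x₂ and x₁ > ε one has both P²(x, B) ≥ μ(B) and P³(x, B) ≥ μ(B), where P²(x, B) = P[ψ(ψ(x)·η₁², x₁)·η₂² ∈ B₁ and ψ(x)·η₁² ∈ B₂] and P³(x, B) = P[ψ(ψ(ψ(x)·η₁², x₁)·η₂², ψ(x)·η₁²)·η₃² ∈ B₁ and ψ(ψ(x)·η₁², x₁)·η₂² ∈ B₂]. (This makes the set C₁ = {x₁ ≤ k·x₂, x₁ > ε} simultaneously ν₂-small and ν₃-small with ν₂ = ν₃ = μ, which yields aperiodicity of the chain.) -/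

import Mathlib

open MeasureTheory ProbabilityTheory Set Filter
open scoped ENNReal

/-- Aperiodicity: under Assumption A with `k > 0` and `ε > 0`, the nontrivial measure
`μ(B₁ × B₂) = P[ω η₃² ∈ B₁, ω η₁² ≤ kε, ω η₂² ≤ kε, ω η₂² ∈ B₂, η₂² ≤ k η₁²]` minorizes
both the two-step and the three-step transition probabilities on
`C₁ = {x₁ ≤ k x₂, x₁ > ε}`. -/
theorem stmt9
    {Ω' : Type*} [MeasurableSpace Ω'] (P : Measure Ω') [IsProbabilityMeasure P]
    (ω α k : ℝ) (hω : 0 < ω) (hα : 0 ≤ α) (hk : 0 < k)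
    (ψ : ℝ → ℝ → ℝ)
    (hψ : ∀ x₁ x₂, ψ x₁ x₂ = ω + α * x₁ * (if k * x₂ < x₁ then 1 else 0))
    (η₁ η₂ η₃ : Ω' → ℝ) (hη₁ : Measurable η₁) (hη₂ : Measurable η₂) (hη₃ : Measurable η₃)
    (hindep : iIndepFun ![η₁, η₂, η₃] P)
    (f : ℝ → ℝ≥0∞) (hf : Measurable f) (hfpos : ∀ x, 0 ≤ x → 0 < f x)
    (hd₁ : Measure.map (fun z => (η₁ z) ^ 2) P = (volume.restrict (Ici (0 : ℝ))).withDensity f)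
    (hd₂ : Measure.map (fun z => (η₂ z) ^ 2) P = (volume.restrict (Ici (0 : ℝ))).withDensity f)
    (hd₃ : Measure.map (fun z => (η₃ z) ^ 2) P = (volume.restrict (Ici (0 : ℝ))).withDensity f)
    (hint₁ : Integrable η₁ P) (hint₂ : Integrable η₂ P) (hint₃ : Integrable η₃ P)
    (hm₁ : ∫ z, η₁ z ∂P = 0) (hm₂ : ∫ z, η₂ z ∂P = 0) (hm₃ : ∫ z, η₃ z ∂P = 0)
    (hv₁ : ∫ z, (η₁ z) ^ 2 ∂P = 1) (hv₂ : ∫ z, (η₂ z) ^ 2 ∂P = 1)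
    (hv₃ : ∫ z, (η₃ z) ^ 2 ∂P = 1)
    (ε : ℝ) (hε : 0 < ε) :
    0 < P {z | ω * (η₃ z) ^ 2 ∈ Ici (0 : ℝ) ∧ ω * (η₁ z) ^ 2 ≤ k * ε ∧
               ω * (η₂ z) ^ 2 ≤ k * ε ∧ ω * (η₂ z) ^ 2 ∈ Ici (0 : ℝ) ∧
               (η₂ z) ^ 2 ≤ k * (η₁ z) ^ 2} ∧
    (∀ B₁ B₂ : Set ℝ, MeasurableSet B₁ → MeasurableSet B₂ → B₁ ⊆ Ici 0 → B₂ ⊆ Ici 0 →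
      ∀ x₁ x₂ : ℝ, 0 ≤ x₁ → 0 ≤ x₂ → x₁ ≤ k * x₂ → ε < x₁ →
        P {z | ω * (η₃ z) ^ 2 ∈ B₁ ∧ ω * (η₁ z) ^ 2 ≤ k * ε ∧
               ω * (η₂ z) ^ 2 ≤ k * ε ∧ ω * (η₂ z) ^ 2 ∈ B₂ ∧
               (η₂ z) ^ 2 ≤ k * (η₁ z) ^ 2} ≤
          P {z | ψ (ψ x₁ x₂ * (η₁ z) ^ 2) x₁ * (η₂ z) ^ 2 ∈ B₁ ∧
                 ψ x₁ x₂ * (η₁ z) ^ 2 ∈ B₂} ∧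
        P {z | ω * (η₃ z) ^ 2 ∈ B₁ ∧ ω * (η₁ z) ^ 2 ≤ k * ε ∧
               ω * (η₂ z) ^ 2 ≤ k * ε ∧ ω * (η₂ z) ^ 2 ∈ B₂ ∧
               (η₂ z) ^ 2 ≤ k * (η₁ z) ^ 2} ≤
          P {z | ψ (ψ (ψ x₁ x₂ * (η₁ z) ^ 2) x₁ * (η₂ z) ^ 2) (ψ x₁ x₂ * (η₁ z) ^ 2) *
                   (η₃ z) ^ 2 ∈ B₁ ∧
                 ψ (ψ x₁ x₂ * (η₁ z) ^ 2) x₁ * (η₂ z) ^ 2 ∈ B₂}) := by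
  have hψω : ∀ a b : ℝ, a ≤ k * b → ψ a b = ω := by
    intro a b h
    rw [hψ, if_neg (not_lt.mpr h)]
    ring
  set μd := (volume.restrict (Ici (0 : ℝ))).withDensity f with hμd
  have hsq : Measurable fun t : ℝ => t ^ 2 := by fun_prop
  have hmap : ∀ (g : Ω' → ℝ), Measurable g →
      Measure.map (fun z => (g z) ^ 2) P = μd →
      ∀ T : Set ℝ, MeasurableSet T → P ((fun z => (g z) ^ 2) ⁻¹' T) = μd T := by
    intro g hg hm T hT
    rw [← Measure.map_apply (hg.pow_const 2) hT, hm]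
  have hμdpos : ∀ a b : ℝ, 0 ≤ a → a < b → 0 < μd (Icc a b) := by
    intro a b ha hab
    have hS : MeasurableSet (Icc a b) := measurableSet_Icc
    have hsub : Icc a b ⊆ Function.support f := fun x hx =>
      (hfpos x (le_trans ha hx.1)).ne'
    have hIcc : Icc a b ∩ Ici (0:ℝ) = Icc a b :=
      inter_eq_left.mpr (fun x hx => le_trans ha hx.1)
    have hsupp : Function.support f ∩ Icc a b = Icc a b := inter_eq_right.mpr hsub
    rw [hμd, withDensity_apply f hS, Measure.restrict_restrict hS, hIcc,
      lintegral_pos_iff_support hf, Measure.restrict_apply' hS, hsupp, Real.volume_Icc]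
    exact ENNReal.ofReal_pos.mpr (by linarith)
  -- independence
  have i12 : IndepFun η₁ η₂ P := hindep.indepFun (i := 0) (j := 1) (by decide)
  have i23 : IndepFun η₂ η₃ P := hindep.indepFun (i := 1) (j := 2) (by decide)
  have j12 : IndepFun (fun z => (η₁ z) ^ 2) (fun z => (η₂ z) ^ 2) P := i12.comp hsq hsq
  have j23 : IndepFun (fun z => (η₂ z) ^ 2) (fun z => (η₃ z) ^ 2) P := i23.comp hsq hsq
  constructor
  · -- positivity
    set c : ℝ := k * ε / (2 * ω) with hc
    have hcpos : 0 < c := by positivity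
    set m : ℝ := min (k * ε / ω) (k * c) with hm
    have hmpos : 0 < m := lt_min (by positivity) (by positivity)
    have hsub : (fun z => (η₁ z) ^ 2) ⁻¹' Icc c (2 * c) ∩
        (fun z => (η₂ z) ^ 2) ⁻¹' Icc 0 m ⊆
        {z | ω * (η₃ z) ^ 2 ∈ Ici (0 : ℝ) ∧ ω * (η₁ z) ^ 2 ≤ k * ε ∧
             ω * (η₂ z) ^ 2 ≤ k * ε ∧ ω * (η₂ z) ^ 2 ∈ Ici (0 : ℝ) ∧
             (η₂ z) ^ 2 ≤ k * (η₁ z) ^ 2} := by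
      rintro z ⟨⟨h1a, h1b⟩, h2a, h2b⟩
      have h2c : ω * (2 * c) = k * ε := by
        field_simp [hc]
        rw [hc]; field_simp
      have hmω : m ≤ k * ε / ω := min_le_left _ _
      have hmc : m ≤ k * c := min_le_right _ _
      refine ⟨mul_nonneg hω.le (sq_nonneg _), ?_, ?_, mul_nonneg hω.le (sq_nonneg _), ?_⟩
      · calc ω * (η₁ z) ^ 2 ≤ ω * (2 * c) := mul_le_mul_of_nonneg_left h1b hω.le
          _ = k * ε := h2c
      · have : (η₂ z) ^ 2 ≤ k * ε / ω := le_trans h2b hmω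
        calc ω * (η₂ z) ^ 2 ≤ ω * (k * ε / ω) := mul_le_mul_of_nonneg_left this hω.le
          _ = k * ε := by field_simp
      · calc (η₂ z) ^ 2 ≤ k * c := le_trans h2b hmc
          _ ≤ k * (η₁ z) ^ 2 := mul_le_mul_of_nonneg_left h1a hk.le
    refine lt_of_lt_of_le ?_ (measure_mono hsub)
    rw [j12.measure_inter_preimage_eq_mul _ _ measurableSet_Icc measurableSet_Icc,
      hmap η₁ hη₁ hd₁ _ measurableSet_Icc, hmap η₂ hη₂ hd₂ _ measurableSet_Icc]
    exact ENNReal.mul_pos (hμdpos c (2 * c) hcpos.le (by linarith)).ne'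
      (hμdpos 0 m le_rfl hmpos).ne'
  · intro B₁ B₂ hB₁ hB₂ _ _ x₁ x₂ hx₁ _ hxk hεx
    set T₁ : Set ℝ := (fun t => ω * t) ⁻¹' B₁ with hT₁
    set T₂ : Set ℝ := (fun t => ω * t) ⁻¹' B₂ ∩ {t | ω * t ≤ k * ε} with hT₂
    have hmul : Measurable fun t : ℝ => ω * t := by fun_prop
    have hT₁m : MeasurableSet T₁ := hmul hB₁
    have hT₂m : MeasurableSet T₂ := (hmul hB₂).inter (measurableSet_le hmul measurable_const)
    have hψx : ψ x₁ x₂ = ω := hψω x₁ x₂ hxk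
    have hkεx : k * ε ≤ k * x₁ := mul_le_mul_of_nonneg_left hεx.le hk.le
    constructor
    · -- two-step
      calc P {z | ω * (η₃ z) ^ 2 ∈ B₁ ∧ ω * (η₁ z) ^ 2 ≤ k * ε ∧
               ω * (η₂ z) ^ 2 ≤ k * ε ∧ ω * (η₂ z) ^ 2 ∈ B₂ ∧
               (η₂ z) ^ 2 ≤ k * (η₁ z) ^ 2}
          ≤ P ((fun z => (η₃ z) ^ 2) ⁻¹' T₁ ∩ (fun z => (η₂ z) ^ 2) ⁻¹' T₂) := by
            refine measure_mono ?_
            rintro z ⟨h1, _, h3, h4, _⟩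
            exact ⟨h1, h4, h3⟩
        _ = μd T₂ * μd T₁ := by
            rw [inter_comm,
              j23.measure_inter_preimage_eq_mul _ _ hT₂m hT₁m,
              hmap η₂ hη₂ hd₂ _ hT₂m, hmap η₃ hη₃ hd₃ _ hT₁m]
        _ = P ((fun z => (η₁ z) ^ 2) ⁻¹' T₂ ∩ (fun z => (η₂ z) ^ 2) ⁻¹' T₁) := by
            rw [j12.measure_inter_preimage_eq_mul _ _ hT₂m hT₁m,
              hmap η₁ hη₁ hd₁ _ hT₂m, hmap η₂ hη₂ hd₂ _ hT₁m]
        _ ≤ P {z | ψ (ψ x₁ x₂ * (η₁ z) ^ 2) x₁ * (η₂ z) ^ 2 ∈ B₁ ∧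
                 ψ x₁ x₂ * (η₁ z) ^ 2 ∈ B₂} := by
            refine measure_mono ?_
            rintro z ⟨⟨h1, h2⟩, h3⟩
            have hψ1 : ψ (ψ x₁ x₂ * (η₁ z) ^ 2) x₁ = ω := by
              rw [hψx]
              exact hψω _ _ (le_trans h2 hkεx)
            rw [Set.mem_setOf_eq, hψ1, hψx]
            exact ⟨h3, h1⟩
    · -- three-step
      refine measure_mono ?_
      rintro z ⟨h1, h2, h3, h4, h5⟩
      have hψ1 : ψ (ψ x₁ x₂ * (η₁ z) ^ 2) x₁ = ω := by
        rw [hψx]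
        exact hψω _ _ (le_trans h2 hkεx)
      have hψ2 : ψ (ψ (ψ x₁ x₂ * (η₁ z) ^ 2) x₁ * (η₂ z) ^ 2) (ψ x₁ x₂ * (η₁ z) ^ 2) = ω := by
        rw [hψ1, hψx]
        refine hψω _ _ ?_
        have := mul_le_mul_of_nonneg_left h5 hω.le
        calc ω * (η₂ z) ^ 2 ≤ ω * (k * (η₁ z) ^ 2) := this
          _ = k * (ω * (η₁ z) ^ 2) := by ring
      rw [Set.mem_setOf_eq, hψ2, hψ1]
      exact ⟨h1, h4⟩
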